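/- Let V ⊂ L²(0,T) be the space of continuous piecewise linear functions on a uniform partition with mesh size h_t vanishing at t = 0, and let W ⊂ H¹₀(Ω) for Ω = (0,L) be continuous piecewise linear functions on a uniform spatial partition with mesh size h_x. If h_t < h_x, then for every nonzero u_h ∈ W ⊗ V there exists w_h in the corresponding test space (piecewise bilinear, vanishing at t = T) with -⟨∂_t u_h, ∂_t w_h⟩_{L²(Q)} + ⟨∂_x u_h, ∂_x w_h⟩_{L²(Q)} ≠ 0; i.e. the unstabilised Galerkin system matrix -A_{h_t} ⊗ M_{h_x} + M_{h_t} ⊗ A_{h_x} is nonsingular under the CFL condition h_t < h_x. -/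
import Mathlib


open Matrix
open scoped Kronecker

private lemma sum_ite_le_aux {m : ℕ} (e : ℝ) (he : 0 ≤ e) (P : Fin m → Prop) [DecidablePred P]
    (huniq : ∀ a b, P a → P b → a = b) :
    ∑ j : Fin m, (if P j then e else 0) ≤ e := by
  calc ∑ j : Fin m, (if P j then e else 0)
      = ∑ _j ∈ Finset.univ.filter P, e := (Finset.sum_filter _ _).symm
    _ = (Finset.univ.filter P).card * e := by rw [Finset.sum_const, nsmul_eq_mul]
    _ ≤ 1 * e := by
        refine mul_le_mul_of_nonneg_right ?_ he
        have : (Finset.univ.filter P).card ≤ 1 :=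
          Finset.card_le_one.mpr (fun a ha b hb =>
            huniq a b (Finset.mem_filter.1 ha).2 (Finset.mem_filter.1 hb).2)
        exact_mod_cast this
    _ = e := one_mul e

/-- under the CFL condition `h_t < h_x`, the unstabilised space-time
Galerkin matrix `-A_{h_t} ⊗ M_{h_x} + M_{h_t} ⊗ A_{h_x}` for piecewise (bi)linear
ansatz functions (vanishing at `t = 0`) against test functions (vanishing at `t = T`)
on uniform meshes of `Q = (0,L) × (0,T)` is nonsingular; equivalently, for every
nonzero discrete `u_h` there is a discrete test function `w_h` with
`-⟨∂ₜu_h, ∂ₜw_h⟩ + ⟨∂ₓu_h, ∂ₓw_h⟩ ≠ 0`. Test basis functions are indexed by the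
time nodes `0,…,N_t-1`, ansatz basis functions by `1,…,N_t`, and spatial hat
functions by the interior nodes `1,…,N_x-1`. -/
theorem stmt10 (L T : ℝ) (hL : 0 < L) (hT : 0 < T) (Nx Nt : ℕ)
    (hNx : 0 < Nx) (hNt : 0 < Nt)
    (hx ht : ℝ) (hhx : hx = L / Nx) (hht : ht = T / Nt) (hCFL : ht < hx)
    (Mx Ax : Matrix (Fin (Nx - 1)) (Fin (Nx - 1)) ℝ)
    (At Mt : Matrix (Fin Nt) (Fin Nt) ℝ)
    (hMx : ∀ i j, Mx i j =
      hx * (if (i : ℕ) = (j : ℕ) then 2 / 3 else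
        if (i : ℕ) + 1 = (j : ℕ) ∨ (j : ℕ) + 1 = (i : ℕ) then 1 / 6 else 0))
    (hAx : ∀ i j, Ax i j =
      1 / hx * (if (i : ℕ) = (j : ℕ) then 2 else
        if (i : ℕ) + 1 = (j : ℕ) ∨ (j : ℕ) + 1 = (i : ℕ) then -1 else 0))
    (hAt : ∀ n m, At n m =
      1 / ht * (if (n : ℕ) = (m : ℕ) + 1 then 2 else
        if (n : ℕ) = (m : ℕ) + 2 ∨ (n : ℕ) = (m : ℕ) then -1 else 0))
    (hMt : ∀ n m, Mt n m =
      ht * (if (n : ℕ) = (m : ℕ) + 1 then 2 / 3 else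
        if (n : ℕ) = (m : ℕ) + 2 ∨ (n : ℕ) = (m : ℕ) then 1 / 6 else 0)) :
    (-(At ⊗ₖ Mx) + Mt ⊗ₖ Ax).det ≠ 0 := by
  have hxpos : 0 < hx := by rw [hhx]; positivity
  have htpos : 0 < ht := by rw [hht]; positivity
  have hxne : hx ≠ 0 := ne_of_gt hxpos
  have htne : ht ≠ 0 := ne_of_gt htpos
  obtain ⟨d, hd⟩ : ∃ d : ℝ, d = 2 * hx / (3 * ht) + ht / (3 * hx) := ⟨_, rfl⟩
  obtain ⟨e, he⟩ : ∃ e : ℝ, e = hx / (6 * ht) - ht / (6 * hx) := ⟨_, rfl⟩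
  have he0 : 0 ≤ e := by
    have h : e = (hx - ht) * (hx + ht) / (6 * ht * hx) := by
      rw [he]; field_simp; ring
    rw [h]
    exact le_of_lt (div_pos (mul_pos (sub_pos.2 hCFL) (by positivity)) (by positivity))
  have hdpos : 0 < d := by rw [hd]; positivity
  have hlt : e + e < d := by
    have h1 : d - (e + e) = hx / (3 * ht) + 2 * ht / (3 * hx) := by
      rw [hd, he]; field_simp; ring
    have hX : 0 < hx / (3 * ht) := by positivity
    have hY : 0 < 2 * ht / (3 * hx) := by positivity
    linarith [h1, hX, hY]
  -- the diagonal block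
  set C : Matrix (Fin (Nx - 1)) (Fin (Nx - 1)) ℝ :=
    fun i j => (1 / ht) * Mx i j + (ht / 6) * Ax i j with hC
  have hCe : ∀ i j, C i j = if (i : ℕ) = (j : ℕ) then d else
      if (i : ℕ) + 1 = (j : ℕ) ∨ (j : ℕ) + 1 = (i : ℕ) then e else 0 := by
    intro i j
    rw [hC]
    simp only [hMx i j, hAx i j]
    split_ifs with h1 h2
    · rw [hd]; field_simp; ring
    · rw [he]; field_simp; ring
    · ring
  have hCdet : C.det ≠ 0 := by
    apply det_ne_zero_of_sum_row_lt_diag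
    intro k
    have hkk : ‖C k k‖ = d := by
      rw [hCe k k, if_pos rfl, Real.norm_eq_abs, abs_of_pos hdpos]
    rw [hkk]
    calc ∑ j ∈ Finset.univ.erase k, ‖C k j‖
        ≤ ∑ j ∈ Finset.univ.erase k,
            ((if (k : ℕ) + 1 = (j : ℕ) then e else 0)
              + (if (j : ℕ) + 1 = (k : ℕ) then e else 0)) := by
          refine Finset.sum_le_sum (fun j hj => ?_)
          have hjk : (k : ℕ) ≠ (j : ℕ) := by
            intro h
            exact (Finset.mem_erase.1 hj).1 (Fin.ext h.symm)
          rw [hCe k j, if_neg hjk, Real.norm_eq_abs]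
          by_cases h1 : (k : ℕ) + 1 = (j : ℕ)
          · rw [if_pos (Or.inl h1), if_pos h1, if_neg (by omega), abs_of_nonneg he0]
            linarith
          · by_cases h2 : (j : ℕ) + 1 = (k : ℕ)
            · rw [if_pos (Or.inr h2), if_neg h1, if_pos h2, abs_of_nonneg he0]
              linarith
            · rw [if_neg (by tauto), if_neg h1, if_neg h2]
              simp
      _ ≤ ∑ j : Fin (Nx - 1),
            ((if (k : ℕ) + 1 = (j : ℕ) then e else 0)
              + (if (j : ℕ) + 1 = (k : ℕ) then e else 0)) := by
          refine Finset.sum_le_sum_of_subset_of_nonneg (Finset.erase_subset _ _)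
            (fun j _ _ => by positivity)
      _ = (∑ j : Fin (Nx - 1), (if (k : ℕ) + 1 = (j : ℕ) then e else 0))
            + ∑ j : Fin (Nx - 1), (if (j : ℕ) + 1 = (k : ℕ) then e else 0) :=
          Finset.sum_add_distrib
      _ ≤ e + e := by
          gcongr
          · exact sum_ite_le_aux e he0 _ (fun a b ha hb => Fin.ext (by omega))
          · exact sum_ite_le_aux e he0 _ (fun a b ha hb => Fin.ext (by omega))
      _ < d := hlt
  -- block triangularity in time
  set B : Matrix (Fin Nt × Fin (Nx - 1)) (Fin Nt × Fin (Nx - 1)) ℝ :=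
    -(At ⊗ₖ Mx) + Mt ⊗ₖ Ax with hB
  have hBT : BlockTriangular B (fun p : Fin Nt × Fin (Nx - 1) => -((p.1 : ℕ) : ℤ)) := by
    intro p q h
    simp only [neg_lt_neg_iff, Nat.cast_lt] at h
    have h1 : ¬ ((p.1 : ℕ) = (q.1 : ℕ) + 1) := by omega
    have h2 : ¬ ((p.1 : ℕ) = (q.1 : ℕ) + 2 ∨ (p.1 : ℕ) = (q.1 : ℕ)) := by omega
    simp [hB, Matrix.add_apply, Matrix.neg_apply, Matrix.kroneckerMap_apply,
      hAt p.1 q.1, hMt p.1 q.1, h1, h2]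
  rw [hBT.det]
  refine Finset.prod_ne_zero_iff.mpr (fun a ha => ?_)
  obtain ⟨p, -, hpa⟩ := Finset.mem_image.mp ha
  set n : Fin Nt := p.1 with hn
  have hmem : ∀ q : Fin Nt × Fin (Nx - 1), (-((q.1 : ℕ) : ℤ) = a) ↔ q.1 = n := by
    intro q
    rw [← hpa]
    constructor
    · intro h
      exact Fin.ext (by omega)
    · intro h; rw [h]
  let E : Fin (Nx - 1) ≃ {q : Fin Nt × Fin (Nx - 1) // -((q.1 : ℕ) : ℤ) = a} :=
    { toFun := fun j => ⟨(n, j), (hmem (n, j)).mpr rfl⟩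
      invFun := fun q => q.1.2
      left_inv := fun j => rfl
      right_inv := fun q => by
        have h1 : q.1.1 = n := (hmem q.1).mp q.2
        apply Subtype.ext
        exact Prod.ext h1.symm rfl }
  have hmat : B.toSquareBlock (fun p : Fin Nt × Fin (Nx - 1) => -((p.1 : ℕ) : ℤ)) a
      = C.submatrix E.symm E.symm := by
    ext x y
    have hx1 : x.1.1 = n := (hmem x.1).mp x.2
    have hy1 : y.1.1 = n := (hmem y.1).mp y.2
    have hAtnn : At x.1.1 y.1.1 = -(1 / ht) := by
      rw [hAt, hx1, hy1]
      rw [if_neg (by omega), if_pos (by omega)]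
      ring
    have hMtnn : Mt x.1.1 y.1.1 = ht / 6 := by
      rw [hMt, hx1, hy1]
      rw [if_neg (by omega), if_pos (by omega)]
      ring
    show B x.1 y.1 = C x.1.2 y.1.2
    rw [hB, hC]
    simp only [Matrix.add_apply, Matrix.neg_apply, Matrix.kroneckerMap_apply]
    rw [hAtnn, hMtnn]
    ring
  rw [hmat, Matrix.det_submatrix_equiv_self]
  exact hCdet
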